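/- Let H ∈ M_n(M_k) be positive semidefinite. For 1 ≤ i,j ≤ n write H_{i,j} = [h^{i,j}_{l,m}]_{l,m=1}^k, and define G_{l,m} = [h^{i,j}_{l,m}]_{i,j=1}^n ∈ M_n and det₁H = [det G_{l,m}]_{l,m=1}^k. Then (tr(det₁H)/k)^k ≥ det H. -/

import Mathlib

open Matrix BigOperators ComplexOrder

section Aux
variable {m : Type*} [Fintype m] [DecidableEq m]


lemma psd_det_eq_re {M : Matrix m m ℂ} (hM : M.PosSemidef) :
    M.det = (M.det.re : ℂ) ∧ 0 ≤ M.det.re := by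
  have h2 : M.det = ((∏ i, hM.1.eigenvalues i : ℝ) : ℂ) := by
    rw [hM.1.det_eq_prod_eigenvalues]; push_cast; rfl
  have h3 : 0 ≤ (∏ i, hM.1.eigenvalues i : ℝ) :=
    Finset.prod_nonneg fun i _ => hM.eigenvalues_nonneg i
  rw [h2, Complex.ofReal_re]; exact ⟨rfl, h3⟩

lemma psd_eigenvalues_le_one {M : Matrix m m ℂ} (hM : M.PosSemidef)
    (h1 : ((1 : Matrix m m ℂ) - M).PosSemidef) (i : m) : hM.1.eigenvalues i ≤ 1 := by
  have hv := hM.1.eigenvalues_eq i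
  set v := ⇑(hM.1.eigenvectorBasis i) with hvdef
  have hnorm : (dotProduct (star v) v) = 1 := by
    have hn := hM.1.eigenvectorBasis.orthonormal.1 i
    have h' : @inner ℂ _ _ (hM.1.eigenvectorBasis i) (hM.1.eigenvectorBasis i) = 1 := by
      rw [@inner_self_eq_norm_sq_to_K ℂ, hn]; norm_num
    rw [← h', EuclideanSpace.inner_eq_star_dotProduct, dotProduct_comm]
  have h2 := h1.re_dotProduct_nonneg v
  rw [sub_mulVec, one_mulVec, dotProduct_sub] at h2
  simp only [map_sub, RCLike.re_to_complex] at h2 hv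
  rw [hnorm] at h2
  simp only [Complex.one_re] at h2
  linarith

lemma psd_det_le_one {M : Matrix m m ℂ} (hM : M.PosSemidef)
    (h1 : ((1 : Matrix m m ℂ) - M).PosSemidef) : M.det.re ≤ 1 := by
  have h2 : M.det = ((∏ i, hM.1.eigenvalues i : ℝ) : ℂ) := by
    rw [hM.1.det_eq_prod_eigenvalues]; push_cast; rfl
  rw [h2, Complex.ofReal_re]
  exact Finset.prod_le_one (fun i _ => hM.eigenvalues_nonneg i)
    (fun i _ => psd_eigenvalues_le_one hM h1 i)

lemma psd_posDef_of_det_ne_zero {M : Matrix m m ℂ} (hM : M.PosSemidef)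
    (hd : M.det ≠ 0) : M.PosDef := by
  exact hM.posDef_iff_det_ne_zero.mpr hd

open scoped MatrixOrder in
lemma psd_det_mono {X Y : Matrix m m ℂ} (hX : X.PosSemidef) (hYX : (Y - X).PosSemidef) :
    X.det.re ≤ Y.det.re := by
  have hY : Y.PosSemidef := by simpa using hX.add hYX
  by_cases hYd : Y.det = 0
  · have hXd : X.det = 0 := by
      by_contra hXd
      have hXpd : X.PosDef := psd_posDef_of_det_ne_zero hX hXd
      have : (X + (Y - X)).PosDef := hXpd.add_posSemidef hYX
      rw [add_sub_cancel] at this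
      exact (ne_of_gt this.det_pos) hYd
    rw [hXd, hYd]
  · have hYpd : Y.PosDef := psd_posDef_of_det_ne_zero hY hYd
    set S := CFC.sqrt Y with hSdef
    have hS : S.PosSemidef := (CFC.sqrt_nonneg Y).posSemidef
    have hSS : S * S = Y := CFC.sqrt_mul_sqrt_self Y hY.nonneg
    have hSd : S.det ≠ 0 := by
      intro h
      apply hYd
      rw [← hSS, det_mul, h, mul_zero]
    have hSu : IsUnit S.det := hSd.isUnit
    have hSh : (S⁻¹)ᴴ = S⁻¹ := by
      rw [conjTranspose_nonsing_inv, hS.1]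
    set M := S⁻¹ * X * S⁻¹ with hMdef
    have hM : M.PosSemidef := by
      have := hX.conjTranspose_mul_mul_same S⁻¹
      rwa [hSh] at this
    have hid : S⁻¹ * Y * S⁻¹ = 1 := by
      rw [← hSS, Matrix.mul_assoc, Matrix.mul_assoc, Matrix.mul_nonsing_inv S hSu,
        Matrix.mul_one, Matrix.nonsing_inv_mul S hSu]
    have h1M : ((1 : Matrix m m ℂ) - M).PosSemidef := by
      have := hYX.conjTranspose_mul_mul_same S⁻¹
      rwa [hSh, Matrix.mul_sub, Matrix.sub_mul, hid] at this
    have hle := psd_det_le_one hM h1M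
    have hMd : M.det = X.det / Y.det := by
      rw [hMdef, det_mul, det_mul, ← hSS, det_mul, det_nonsing_inv]
      rw [Ring.inverse_eq_inv]; field_simp
    have hyre : 0 < Y.det.re := (Complex.lt_def.mp hYpd.det_pos).1
    obtain ⟨hXeq, hXnn⟩ := psd_det_eq_re hX
    obtain ⟨hYeq, _⟩ := psd_det_eq_re hY
    rw [hMd, hXeq, hYeq, ← Complex.ofReal_div, Complex.ofReal_re] at hle
    exact (div_le_one hyre).mp hle

lemma fischer_two {m' n' : Type*} [Fintype m'] [DecidableEq m'] [Fintype n'] [DecidableEq n']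
    {A : Matrix m' m' ℂ} {B : Matrix m' n' ℂ} {D : Matrix n' n' ℂ}
    (h : (fromBlocks A B Bᴴ D).PosSemidef) :
    (fromBlocks A B Bᴴ D).det.re ≤ A.det.re * D.det.re := by
  have hA : A.PosSemidef := h.submatrix (Sum.inl : m' → m' ⊕ n')
  have hD : D.PosSemidef := h.submatrix (Sum.inr : n' → m' ⊕ n')
  by_cases hAd : A.det = 0
  · obtain ⟨x, hx, hAx⟩ := Matrix.exists_mulVec_eq_zero_iff.mpr hAd
    set z : m' ⊕ n' → ℂ := Sum.elim x 0 with hzdef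
    have hzne : z ≠ 0 := by
      intro hz0
      apply hx
      funext i
      have := congrFun hz0 (Sum.inl i)
      simpa [hzdef] using this
    have hz : z = Sum.elim x 0 := rfl
    have q : star z ⬝ᵥ ((fromBlocks A B Bᴴ D) *ᵥ z) = 0 := by
      rw [hz, Matrix.fromBlocks_mulVec]
      simp only [Sum.elim_comp_inl, Sum.elim_comp_inr, hAx, Matrix.mulVec_zero, add_zero,
        zero_add]
      simp [dotProduct, Fintype.sum_sum_type]
    have hMz := (h.dotProduct_mulVec_zero_iff z).mp q
    have hMd : (fromBlocks A B Bᴴ D).det = 0 :=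
      Matrix.exists_mulVec_eq_zero_iff.mp ⟨z, hzne, hMz⟩
    rw [hMd, hAd]
    simp
  · have hApd : A.PosDef := psd_posDef_of_det_ne_zero hA hAd
    haveI : Invertible A := A.invertibleOfIsUnitDet (IsUnit.mk0 _ hAd)
    have hS : (D - Bᴴ * A⁻¹ * B).PosSemidef := (PosDef.fromBlocks₁₁ B D hApd).mp h
    have hDS : (D - (D - Bᴴ * A⁻¹ * B)).PosSemidef := by
      rw [sub_sub_cancel]
      exact (hApd.inv.posSemidef).conjTranspose_mul_mul_same B
    have hdet : (fromBlocks A B Bᴴ D).det = A.det * (D - Bᴴ * A⁻¹ * B).det := by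
      rw [Matrix.det_fromBlocks₁₁, Matrix.invOf_eq_nonsing_inv]
    obtain ⟨hAeq, hAnn⟩ := psd_det_eq_re hA
    obtain ⟨hSeq, hSnn⟩ := psd_det_eq_re hS
    have hmono := psd_det_mono hS hDS
    calc (fromBlocks A B Bᴴ D).det.re = A.det.re * (D - Bᴴ * A⁻¹ * B).det.re := by
          rw [hdet, hAeq, hSeq, ← Complex.ofReal_mul, Complex.ofReal_re]
          simp
      _ ≤ A.det.re * D.det.re := mul_le_mul_of_nonneg_left hmono hAnn

lemma fischerN {n : ℕ} : ∀ {k : ℕ} (M : Matrix (Fin k × Fin n) (Fin k × Fin n) ℂ),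
    M.PosSemidef →
    M.det.re ≤ ∏ l, (Matrix.of fun i j : Fin n => M (l, i) (l, j)).det.re := by
  intro k
  induction k with
  | zero =>
    intro M hM
    simp [Matrix.det_isEmpty]
  | succ k ih =>
    intro M hM
    let e : Fin n ⊕ (Fin k × Fin n) ≃ Fin (k + 1) × Fin n :=
      { toFun := Sum.elim (fun i => (0, i)) (fun p => (p.1.succ, p.2))
        invFun := fun p => Fin.cases (Sum.inl p.2) (fun l => Sum.inr (l, p.2)) p.1
        left_inv := by rintro (i | ⟨l, i⟩) <;> simp
        right_inv := by
          rintro ⟨l, i⟩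
          refine Fin.cases ?_ (fun l' => ?_) l <;> simp }
    set M' := M.submatrix e e with hM'def
    have hM' : M'.PosSemidef := hM.submatrix e
    have hherm : M'.toBlocks₂₁ = (M'.toBlocks₁₂)ᴴ := by
      ext i j
      simp only [Matrix.toBlocks₂₁, Matrix.toBlocks₁₂, Matrix.conjTranspose_apply,
        Matrix.of_apply]
      conv_lhs => rw [← hM'.1]
      rfl
    have hblocks : M' =
        fromBlocks M'.toBlocks₁₁ M'.toBlocks₁₂ (M'.toBlocks₁₂)ᴴ M'.toBlocks₂₂ := by
      rw [← hherm, Matrix.fromBlocks_toBlocks]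
    have hA : M'.toBlocks₁₁.PosSemidef := hM'.submatrix Sum.inl
    obtain ⟨-, hAnn⟩ := psd_det_eq_re hA
    have hps : (fromBlocks M'.toBlocks₁₁ M'.toBlocks₁₂ (M'.toBlocks₁₂)ᴴ
        M'.toBlocks₂₂).PosSemidef := by rw [← hblocks]; exact hM'
    have key : M'.det.re ≤ M'.toBlocks₁₁.det.re * M'.toBlocks₂₂.det.re := by
      have := fischer_two hps
      rwa [← hblocks] at this
    have hih : M'.toBlocks₂₂.det.re ≤
        ∏ l : Fin k, (Matrix.of fun i j : Fin n =>
          M (l.succ, i) (l.succ, j)).det.re := by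
      exact ih (Matrix.of fun p q : Fin k × Fin n => M (p.1.succ, p.2) (q.1.succ, q.2))
        (hM.submatrix (fun p : Fin k × Fin n => ((p.1.succ : Fin (k+1)), p.2)))
    have hdet : M.det.re = M'.det.re := by
      rw [hM'def, Matrix.det_submatrix_equiv_self]
    rw [Fin.prod_univ_succ]
    calc M.det.re = M'.det.re := hdet
      _ ≤ M'.toBlocks₁₁.det.re * M'.toBlocks₂₂.det.re := key
      _ ≤ M'.toBlocks₁₁.det.re *
          ∏ l : Fin k, (Matrix.of fun i j : Fin n => M (l.succ, i) (l.succ, j)).det.re :=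
        mul_le_mul_of_nonneg_left hih hAnn
      _ = (Matrix.of fun i j : Fin n => M ((0 : Fin (k+1)), i) ((0 : Fin (k+1)), j)).det.re *
          ∏ l : Fin k, (Matrix.of fun i j : Fin n => M (l.succ, i) (l.succ, j)).det.re := rfl


end Aux

/-- First partial determinant: det₁H = [det G_{l,m}]_{l,m}, where
G_{l,m} = [h^{i,j}_{l,m}]_{i,j}. -/
noncomputable def pdet1 {n k : ℕ} (H : Matrix (Fin n × Fin k) (Fin n × Fin k) ℂ) :
    Matrix (Fin k) (Fin k) ℂ :=
  Matrix.of fun l m => (Matrix.of fun i j : Fin n => H (i, l) (j, m)).det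

/-- Choi: (tr(det₁H)/k)^k ≥ det H. -/
theorem stmt8 {n k : ℕ} (hn : 0 < n) (hk : 0 < k)
    (H : Matrix (Fin n × Fin k) (Fin n × Fin k) ℂ) (hH : H.PosSemidef) :
    ((pdet1 H).trace.re / k) ^ k ≥ H.det.re := by

  set e : Fin k × Fin n ≃ Fin n × Fin k := Equiv.prodComm (Fin k) (Fin n) with he
  set M := H.submatrix e e with hMdef
  have hM : M.PosSemidef := hH.submatrix e
  have hfi := fischerN M hM
  have hdetM : M.det = H.det := Matrix.det_submatrix_equiv_self e H
  set z : Fin k → ℝ := fun l => ((pdet1 H) l l).re with hz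
  have hz_eq : ∀ l, (Matrix.of fun i j : Fin n => M (l, i) (l, j)).det.re = z l :=
    fun l => rfl
  have hznn : ∀ l, 0 ≤ z l := by
    intro l
    have hG : (Matrix.of fun i j : Fin n => H (i, l) (j, l)).PosSemidef :=
      hH.submatrix (fun i : Fin n => (i, l))
    exact (psd_det_eq_re hG).2
  have hfi' : H.det.re ≤ ∏ l, z l := by
    rw [← hdetM]
    calc M.det.re ≤ ∏ l, (Matrix.of fun i j : Fin n => M (l, i) (l, j)).det.re := hfi
      _ = ∏ l, z l := by
          exact Finset.prod_congr rfl fun l _ => hz_eq l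
  have htr : (pdet1 H).trace.re = ∑ l, z l := by
    rw [Matrix.trace]
    rw [Complex.re_sum]
    rfl
  have hkR : (0:ℝ) < k := by exact_mod_cast hk
  have hgm := Real.geom_mean_le_arith_mean_weighted Finset.univ (fun _ => 1 / (k:ℝ)) z
      (fun i _ => by positivity) (by rw [Finset.sum_const, Finset.card_univ, Fintype.card_fin, nsmul_eq_mul]; exact mul_one_div_cancel (ne_of_gt hkR)) (fun i _ => hznn i)
  have hsum : ∑ l, (1/(k:ℝ)) * z l = (∑ l, z l) / k := by
    rw [← Finset.mul_sum]; ring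
  have hprod : (∏ l, z l ^ (1/(k:ℝ))) ^ k = ∏ l, z l := by
    rw [← Finset.prod_pow]
    refine Finset.prod_congr rfl fun l _ => ?_
    rw [← Real.rpow_natCast (z l ^ (1/(k:ℝ))) k, ← Real.rpow_mul (hznn l)]
    rw [one_div, inv_mul_cancel₀ (ne_of_gt hkR), Real.rpow_one]
  rw [ge_iff_le]
  calc H.det.re ≤ ∏ l, z l := hfi'
    _ = (∏ l, z l ^ (1/(k:ℝ))) ^ k := hprod.symm
    _ ≤ ((∑ l, z l) / k) ^ k := by
        apply pow_le_pow_left₀ (Finset.prod_nonneg fun i _ => Real.rpow_nonneg (hznn i) _)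
        rw [← hsum]; exact hgm
    _ = ((pdet1 H).trace.re / k) ^ k := by rw [htr]
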